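/- Let $(V, T, w_N)$ be a metric Steiner tree instance in which for every pair of distinct Steiner vertices $v, v'$ lying in the same group $V_x$, every other vertex $u$ satisfies $w_N(u, v) = w_N(u, v')$. Then there exists an optimal Steiner tree $\tau$ such that for each group $V_x$, $|V(\tau) \cap V_x| \le 1$. -/

import Mathlib

noncomputable def edgeW {V : Type*} (w : V → V → ℝ) : Sym2 V → ℝ :=
  Sym2.lift ⟨fun a b => (w a b + w b a) / 2, fun a b => by ring⟩

noncomputable def treeCost {V : Type*} (w : V → V → ℝ) (E : Finset (Sym2 V)) : ℝ :=
  ∑ e ∈ E, edgeW w e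

def Connects {V : Type*} (E : Finset (Sym2 V)) (T : Finset V) : Prop :=
  ∀ u ∈ T, ∀ v ∈ T, (SimpleGraph.fromEdgeSet (E : Set (Sym2 V))).Reachable u v

def IsSteinerTree {V : Type*} (E : Finset (Sym2 V)) (T : Finset V) : Prop :=
  (∀ e ∈ E, ¬ e.IsDiag) ∧
  (SimpleGraph.fromEdgeSet (E : Set (Sym2 V))).IsAcyclic ∧ Connects E T

open Finset SimpleGraph

section Aux
set_option linter.unusedSectionVars false
variable {V : Type*} [Fintype V] [DecidableEq V]

lemma edgeW_mk (w : V → V → ℝ) (a b : V) : edgeW w s(a,b) = (w a b + w b a) / 2 := rfl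

lemma edgeW_nonneg {w : V → V → ℝ} (hnn : ∀ a b, 0 ≤ w a b) (e : Sym2 V) :
    0 ≤ edgeW w e := by
  induction e using Sym2.ind with
  | _ a b => rw [edgeW_mk]; have := hnn a b; have := hnn b a; linarith

lemma treeCost_mono {w : V → V → ℝ} (hnn : ∀ a b, 0 ≤ w a b)
    {E E' : Finset (Sym2 V)} (h : E ⊆ E') : treeCost w E ≤ treeCost w E' :=
  Finset.sum_le_sum_of_subset_of_nonneg h (fun e _ _ => edgeW_nonneg hnn e)

lemma sum_image_le' {α β : Type*} [DecidableEq α] [DecidableEq β] (s : Finset α) (f : α → β) (g : β → ℝ)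
    (hg : ∀ b, 0 ≤ g b) : ∑ b ∈ s.image f, g b ≤ ∑ a ∈ s, g (f a) := by
  induction s using Finset.induction with
  | empty => simp
  | @insert a s hx ih =>
    rw [Finset.image_insert, Finset.sum_insert hx]
    by_cases h : f a ∈ s.image f
    · rw [Finset.insert_eq_of_mem h]
      have := hg (f a); linarith
    · rw [Finset.sum_insert h]; linarith

/-- Rerouting: deleting an edge whose endpoints remain reachable preserves reachability. -/
lemma reachable_erase {E : Finset (Sym2 V)} {a b : V}
    (hab : (fromEdgeSet ((E.erase s(a,b)) : Set (Sym2 V))).Reachable a b) :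
    ∀ u u', (fromEdgeSet (E : Set (Sym2 V))).Reachable u u' →
      (fromEdgeSet ((E.erase s(a,b)) : Set (Sym2 V))).Reachable u u' := by
  intro u u' ⟨p⟩
  induction p with
  | nil => exact Reachable.refl _
  | @cons x y z h p ih =>
    rw [fromEdgeSet_adj] at h
    by_cases he : s(x, y) = s(a, b)
    · rw [Sym2.eq_iff] at he
      rcases he with ⟨rfl, rfl⟩ | ⟨rfl, rfl⟩
      · exact hab.trans ih
      · exact hab.symm.trans ih
    · refine (Adj.reachable ?_).trans ih
      rw [fromEdgeSet_adj]
      refine ⟨?_, h.2⟩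
      simp only [Finset.coe_erase, Set.mem_diff, Finset.mem_coe, Set.mem_singleton_iff]
      exact ⟨h.1, he⟩

lemma exists_steiner_subset (T : Finset V) :
    ∀ n (E : Finset (Sym2 V)), E.card ≤ n → (∀ e ∈ E, ¬ e.IsDiag) →
      Connects E T → ∃ E' ⊆ E, IsSteinerTree E' T := by
  intro n
  induction n with
  | zero =>
    intro E hcard hd hc
    rw [Nat.le_zero, Finset.card_eq_zero] at hcard
    subst hcard
    refine ⟨∅, Finset.Subset.refl _, hd, ?_, hc⟩
    intro v c hc'
    cases c with
    | nil => exact hc'.ne_nil rfl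
    | cons h p => simp [fromEdgeSet_adj] at h
  | succ n ih =>
    intro E hcard hd hc
    by_cases hac : (fromEdgeSet (E : Set (Sym2 V))).IsAcyclic
    · exact ⟨E, Finset.Subset.refl _, hd, hac, hc⟩
    · rw [isAcyclic_iff_forall_adj_isBridge] at hac
      push_neg at hac
      obtain ⟨x, y, hxy, hnb⟩ := hac
      rw [isBridge_iff] at hnb
      push_neg at hnb
      have hr : (fromEdgeSet (E : Set (Sym2 V)) \ fromEdgeSet {s(x,y)}).Reachable x y :=
        hnb
      -- relate deletion graph with erase
      have hle : fromEdgeSet (E : Set (Sym2 V)) \ fromEdgeSet {s(x,y)}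
          ≤ fromEdgeSet ((E.erase s(x,y)) : Set (Sym2 V)) := by
        intro p q hpq
        simp only [sdiff_adj, fromEdgeSet_adj] at hpq ⊢
        refine ⟨?_, hpq.1.2⟩
        simp only [Finset.coe_erase, Set.mem_diff, Finset.mem_coe, Set.mem_singleton_iff]
        refine ⟨hpq.1.1, ?_⟩
        intro hmem
        exact hpq.2 ⟨by simpa using hmem, hpq.1.2⟩
      have hr' : (fromEdgeSet ((E.erase s(x,y)) : Set (Sym2 V))).Reachable x y :=
        hr.mono hle
      have hmemE : s(x,y) ∈ E := by
        rw [fromEdgeSet_adj] at hxy; exact hxy.1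
      have hcard' : (E.erase s(x,y)).card ≤ n := by
        rw [Finset.card_erase_of_mem hmemE]
        omega
      obtain ⟨E', hE'sub, hE'⟩ := ih (E.erase s(x,y)) hcard'
        (fun e he => hd e (Finset.mem_of_mem_erase he))
        (fun u hu u' hu' => reachable_erase hr' u u' (hc u hu u' hu'))
      exact ⟨E', hE'sub.trans (Finset.erase_subset _ _), hE'⟩

end Aux

/- If the points of a metric Steiner tree instance are partitioned into groups such
that any two distinct points in the same group are Steiner vertices that are at equal
distance from every other point, then there is an optimal Steiner tree containing at
most one vertex from each group. -/
open Classical in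
theorem stmt16 {V ι : Type*} [Fintype V] [DecidableEq V] [DecidableEq ι]
    (w : V → V → ℝ) (hsymm : ∀ a b, w a b = w b a) (h0 : ∀ a, w a a = 0)
    (hnn : ∀ a b, 0 ≤ w a b) (htri : ∀ a b c, w a c ≤ w a b + w b c)
    (T : Finset V) (grp : V → ι)
    (hind : ∀ v v' : V, v ≠ v' → grp v = grp v' →
      ∀ u : V, u ≠ v → u ≠ v' → w u v = w u v')
    (hsteiner : ∀ v v' : V, v ≠ v' → grp v = grp v' → v ∉ T) :
    ∃ E : Finset (Sym2 V), IsSteinerTree E T ∧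
      (∀ E' : Finset (Sym2 V), IsSteinerTree E' T → treeCost w E ≤ treeCost w E') ∧
      ∀ i : ι,
        (Finset.univ.filter (fun v => grp v = i ∧ ∃ e ∈ E, v ∈ e)).card ≤ 1 := by
  classical
  -- there exists at least one Steiner tree
  have hex : ∃ E : Finset (Sym2 V), IsSteinerTree E T := by
    set E0 : Finset (Sym2 V) :=
      Finset.univ.filter (fun e => ¬ e.IsDiag) with hE0
    have hconn : Connects E0 T := by
      intro u hu u' hu'
      by_cases huu : u = u'
      · subst huu; exact Reachable.refl _
      · refine Adj.reachable ?_
        rw [SimpleGraph.fromEdgeSet_adj]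
        refine ⟨?_, huu⟩
        simp only [hE0, Finset.coe_filter, Set.mem_setOf_eq, Finset.mem_univ, true_and]
        simpa using huu
    obtain ⟨E', _, hE'⟩ := exists_steiner_subset T E0.card E0 le_rfl
      (fun e he => (Finset.mem_filter.mp he).2) hconn
    exact ⟨E', hE'⟩
  -- minimum-cost Steiner tree
  obtain ⟨Eopt, hEoptS, hEoptmin⟩ := Finset.exists_min_image
    (Finset.univ.filter (fun E : Finset (Sym2 V) => IsSteinerTree E T)) (treeCost w)
    (by obtain ⟨E, hE⟩ := hex; exact ⟨E, Finset.mem_filter.mpr ⟨Finset.mem_univ _, hE⟩⟩)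
  have hEoptST : IsSteinerTree Eopt T := (Finset.mem_filter.mp hEoptS).2
  have hm : ∀ E' : Finset (Sym2 V), IsSteinerTree E' T →
      treeCost w Eopt ≤ treeCost w E' := fun E' hE' =>
    hEoptmin E' (Finset.mem_filter.mpr ⟨Finset.mem_univ _, hE'⟩)
  -- among cheap connecting edge sets, minimize the number of touched vertices
  set P : Finset (Sym2 V) → Prop := fun E =>
    (∀ e ∈ E, ¬ e.IsDiag) ∧ Connects E T ∧ treeCost w E ≤ treeCost w Eopt with hP
  set supp : Finset (Sym2 V) → Finset V := fun E =>
    Finset.univ.filter (fun v => ∃ e ∈ E, v ∈ e) with hsupp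
  obtain ⟨E1, hE1S, hE1min⟩ := Finset.exists_min_image
    (Finset.univ.filter P) (fun E => (supp E).card)
    ⟨Eopt, Finset.mem_filter.mpr ⟨Finset.mem_univ _,
      hEoptST.1, hEoptST.2.2, le_refl _⟩⟩
  obtain ⟨hE1d, hE1c, hE1cost⟩ : P E1 := (Finset.mem_filter.mp hE1S).2
  -- E1 touches at most one vertex of each group
  have hgrp1 : ∀ i : ι,
      (Finset.univ.filter (fun v => grp v = i ∧ ∃ e ∈ E1, v ∈ e)).card ≤ 1 := by
    intro i
    by_contra hcon
    push_neg at hcon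
    rw [Finset.one_lt_card] at hcon
    obtain ⟨v, hv, v', hv', hvne⟩ := hcon
    rw [Finset.mem_filter] at hv hv'
    obtain ⟨-, hgv, hvE⟩ := hv
    obtain ⟨-, hgv', hv'E⟩ := hv'
    have hg : grp v = grp v' := hgv.trans hgv'.symm
    set f : V → V := fun x => if x = v' then v else x with hf
    have hfv' : f v' = v := if_pos rfl
    have hfx : ∀ x, x ≠ v' → f x = x := fun x hx => if_neg hx
    have hfnev' : ∀ x, f x ≠ v' := by
      intro x
      by_cases hx : x = v'
      · subst hx; rw [hfv']; exact hvne
      · rw [hfx x hx]; exact hx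
    set E2 : Finset (Sym2 V) :=
      (E1.image (Sym2.map f)).filter (fun e => ¬ e.IsDiag) with hE2
    have hE2d : ∀ e ∈ E2, ¬ e.IsDiag := fun e he => (Finset.mem_filter.mp he).2
    -- pointwise weight inequality
    have key : ∀ a b : V, a ≠ b → w (f a) (f b) ≤ w a b := by
      intro a b hab
      by_cases ha : a = v'
      · have hbne : b ≠ v' := fun h => hab (ha.trans h.symm)
        rw [ha, hfv', hfx b hbne]
        by_cases hbv : b = v
        · rw [hbv, h0]; exact hnn _ _
        · exact le_of_eq (by rw [hsymm v b, hind v v' hvne hg b hbv hbne, hsymm b v'])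
      · by_cases hb : b = v'
        · rw [hb, hfv', hfx a ha]
          by_cases hav : a = v
          · rw [hav, h0]; exact hnn _ _
          · exact le_of_eq (hind v v' hvne hg a hav ha)
        · rw [hfx a ha, hfx b hb]
    have keyE : ∀ e ∈ E1, edgeW w (Sym2.map f e) ≤ edgeW w e := by
      intro e he
      induction e using Sym2.ind with
      | _ a b =>
        have hab : a ≠ b := by
          have := hE1d _ he
          simpa [Sym2.mk_isDiag_iff] using this
        rw [Sym2.map_pair_eq, edgeW_mk, edgeW_mk]
        have h1 := key a b hab
        have h2 := key b a (Ne.symm hab)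
        linarith
    -- E2 is cheap
    have hE2cost : treeCost w E2 ≤ treeCost w Eopt := by
      calc treeCost w E2 ≤ treeCost w (E1.image (Sym2.map f)) :=
            treeCost_mono hnn (Finset.filter_subset _ _)
        _ ≤ ∑ e ∈ E1, edgeW w (Sym2.map f e) :=
            sum_image_le' E1 (Sym2.map f) (edgeW w) (edgeW_nonneg hnn)
        _ ≤ ∑ e ∈ E1, edgeW w e := Finset.sum_le_sum keyE
        _ ≤ treeCost w Eopt := hE1cost
    -- E2 connects T
    have hv'T : v' ∉ T := hsteiner v' v (Ne.symm hvne) hg.symm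
    have hreach : ∀ x y : V,
        (SimpleGraph.fromEdgeSet (E1 : Set (Sym2 V))).Reachable x y →
        (SimpleGraph.fromEdgeSet (E2 : Set (Sym2 V))).Reachable (f x) (f y) := by
      intro x y ⟨p⟩
      induction p with
      | nil => exact SimpleGraph.Reachable.refl _
      | @cons p q r h hp ih =>
        rw [SimpleGraph.fromEdgeSet_adj] at h
        by_cases hfeq : f p = f q
        · rwa [hfeq]
        · refine (SimpleGraph.Adj.reachable ?_).trans ih
          rw [SimpleGraph.fromEdgeSet_adj]
          refine ⟨?_, hfeq⟩
          have hmem : s(f p, f q) ∈ E2 := by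
            rw [hE2, Finset.mem_filter]
            constructor
            · rw [Finset.mem_image]
              exact ⟨s(p, q), h.1, Sym2.map_pair_eq f p q⟩
            · simpa [Sym2.mk_isDiag_iff] using hfeq
          exact hmem
    have hE2c : Connects E2 T := by
      intro u hu u' hu'
      have hfu : f u = u := hfx u (fun h => hv'T (h ▸ hu))
      have hfu' : f u' = u' := hfx u' (fun h => hv'T (h ▸ hu'))
      have := hreach u u' (hE1c u hu u' hu')
      rwa [hfu, hfu'] at this
    -- supp shrinks strictly
    have hsub : supp E2 ⊆ supp E1 := by
      intro u hu
      rw [hsupp, Finset.mem_filter] at hu ⊢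
      obtain ⟨-, e2, he2, hue2⟩ := hu
      refine ⟨Finset.mem_univ _, ?_⟩
      rw [hE2, Finset.mem_filter, Finset.mem_image] at he2
      obtain ⟨⟨e1, he1, rfl⟩, -⟩ := he2
      rw [Sym2.mem_map] at hue2
      obtain ⟨a, ha, rfl⟩ := hue2
      by_cases hav' : a = v'
      · subst hav'; rw [hfv']; exact hvE
      · rw [hfx a hav']; exact ⟨e1, he1, ha⟩
    have hv'in : v' ∈ supp E1 := by
      rw [hsupp, Finset.mem_filter]; exact ⟨Finset.mem_univ _, hv'E⟩
    have hv'out : v' ∉ supp E2 := by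
      rw [hsupp, Finset.mem_filter]
      rintro ⟨-, e2, he2, hv'e2⟩
      rw [hE2, Finset.mem_filter, Finset.mem_image] at he2
      obtain ⟨⟨e1, he1, rfl⟩, -⟩ := he2
      rw [Sym2.mem_map] at hv'e2
      obtain ⟨a, ha, hfa⟩ := hv'e2
      exact hfnev' a hfa
    have hlt : (supp E2).card < (supp E1).card :=
      Finset.card_lt_card ⟨hsub, fun hle => hv'out (hle hv'in)⟩
    have hE2S : E2 ∈ Finset.univ.filter P :=
      Finset.mem_filter.mpr ⟨Finset.mem_univ _, hE2d, hE2c, hE2cost⟩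
    exact absurd (hE1min E2 hE2S) (not_le.mpr hlt)
  -- extract an acyclic subtree of E1
  obtain ⟨Efin, hfinsub, hfinST⟩ :=
    exists_steiner_subset T E1.card E1 le_rfl hE1d hE1c
  refine ⟨Efin, hfinST, ?_, ?_⟩
  · intro E' hE'
    calc treeCost w Efin ≤ treeCost w E1 := treeCost_mono hnn hfinsub
      _ ≤ treeCost w Eopt := hE1cost
      _ ≤ treeCost w E' := hm E' hE'
  · intro i
    refine le_trans (Finset.card_le_card ?_) (hgrp1 i)
    intro u hu
    rw [Finset.mem_filter] at hu ⊢
    obtain ⟨h1, h2, e, he, hue⟩ := hu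
    exact ⟨h1, h2, e, hfinsub he, hue⟩
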